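/- Let E be a finite effect algebra with pairwise distinct atoms a_1,…,a_m. Then for every x ∈ E there exist natural numbers k_1,…,k_m such that the orthosum k_1 a_1 ⊕ … ⊕ k_m a_m is defined and equals x. -/

import Mathlib

/-- An effect algebra: a set with 0, 1 and a partially defined binary
operation `⊕`, modeled as an `Option`-valued operation. -/
structure EffectAlgebra (E : Type*) where
  oplus : E → E → Option E
  zero : E
  one : E
  comm : ∀ p q, oplus p q = oplus q p
  assoc : ∀ p q r s qr, oplus q r = some qr → oplus p qr = some s →
    ∃ pq, oplus p q = some pq ∧ oplus pq r = some s
  orthosupp : ∀ p, ∃! q, oplus p q = some one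
  zero_unit : ∀ p q, oplus one p = some q → p = zero

namespace EffectAlgebra

variable {E : Type*}

/-- `p ≤ q` iff there is `r` with `p ⊕ r` defined and equal to `q`. -/
def le (W : EffectAlgebra E) (p q : E) : Prop := ∃ r, W.oplus p r = some q

/-- An atom is a minimal element of `E \ {0}`. -/
def IsAtomElem (W : EffectAlgebra E) (x : E) : Prop :=
  x ≠ W.zero ∧ ∀ y : E, W.le y x → y ≠ W.zero → y = x

/-- Partial orthosum of a list of elements. -/
def listSum (W : EffectAlgebra E) : List E → Option E
  | [] => some W.zero
  | x :: xs => (listSum W xs).bind (fun y => W.oplus x y)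

/-- The orthosum `k 0 • a 0 ⊕ ⋯ ⊕ k (m-1) • a (m-1)`, when defined. -/
def mulSum (W : EffectAlgebra E) {m : ℕ} (a : Fin m → E) (k : Fin m → ℕ) : Option E :=
  W.listSum ((List.ofFn (fun t => List.replicate (k t) (a t))).flatten)

/-- `Seq(E)`: tuples `k` with `⨁ k t • a t` defined and equal to `1`. -/
def SeqSet (W : EffectAlgebra E) {m : ℕ} (a : Fin m → E) : Set (Fin m → ℕ) :=
  {k | W.mulSum a k = some W.one}

/-- `a : Fin m → E` enumerates the atoms of `E` without repetition. -/
def AtomFamily (W : EffectAlgebra E) {m : ℕ} (a : Fin m → E) : Prop :=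
  Function.Injective a ∧ (∀ t, W.IsAtomElem (a t)) ∧
    ∀ x : E, W.IsAtomElem x → ∃ t, x = a t

/-- `A ∈ M(E)`: the rows of `A` are pairwise distinct and enumerate `Seq(E)`. -/
def MemM (W : EffectAlgebra E) {m n : ℕ} (a : Fin m → E) (A : Matrix (Fin n) (Fin m) ℕ) : Prop :=
  (∀ i j : Fin n, i ≠ j → ∃ t, A i t ≠ A j t) ∧
    {k : Fin m → ℕ | ∃ i, A i = k} = W.SeqSet a

/-- A state on an effect algebra. -/
def IsState (W : EffectAlgebra E) (s : E → ℝ) : Prop :=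
  (∀ x, 0 ≤ s x ∧ s x ≤ 1) ∧ s W.one = 1 ∧
    ∀ p q r, W.oplus p q = some r → s p + s q ≤ 1 ∧ s r = s p + s q

lemma assoc' (W : EffectAlgebra E) {p q r s pq : E} (h1 : W.oplus p q = some pq)
    (h2 : W.oplus pq r = some s) :
    ∃ qr, W.oplus q r = some qr ∧ W.oplus p qr = some s := by
  obtain ⟨rq, h3, h4⟩ := W.assoc r q p s pq (by rw [W.comm q p]; exact h1)
    (by rw [W.comm r pq]; exact h2)
  exact ⟨rq, by rw [W.comm q r]; exact h3, by rw [W.comm p rq]; exact h4⟩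

lemma one_oplus_zero (W : EffectAlgebra E) : W.oplus W.one W.zero = some W.one := by
  obtain ⟨q, hq, -⟩ := W.orthosupp W.one
  have := W.zero_unit q W.one hq
  rwa [this] at hq

lemma oplus_zero (W : EffectAlgebra E) (p : E) : W.oplus p W.zero = some p := by
  obtain ⟨q, hq, huniq⟩ := W.orthosupp p
  have hq' : W.oplus q p = some W.one := by rw [W.comm]; exact hq
  obtain ⟨p0, h1, h2⟩ := W.assoc' hq' (W.one_oplus_zero)
  obtain ⟨q', hq'2, huniq2⟩ := W.orthosupp q
  have hpq : W.oplus q p = some W.one := hq'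
  have := (huniq2 p0 h2).trans (huniq2 p hq').symm
  rwa [this] at h1

lemma absorb (W : EffectAlgebra E) {p q : E} (h : W.oplus p q = some q) : p = W.zero := by
  obtain ⟨q', hq', -⟩ := W.orthosupp q
  obtain ⟨w, h1, h2⟩ := W.assoc' h hq'
  rw [hq'] at h1
  injection h1 with h1
  rw [← h1] at h2
  exact W.zero_unit p W.one (by rw [W.comm] at h2; exact h2)

lemma pos (W : EffectAlgebra E) {p q : E} (h : W.oplus p q = some W.zero) : p = W.zero := by
  have h1 : W.oplus W.zero W.one = some W.one := by rw [W.comm]; exact W.one_oplus_zero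
  obtain ⟨w, h2, h3⟩ := W.assoc' h h1
  have hq0 : q = W.zero := W.zero_unit q w (by rw [W.comm] at h2; exact h2)
  rw [hq0, W.oplus_zero] at h
  injection h

lemma le_refl (W : EffectAlgebra E) (p : E) : W.le p p := ⟨W.zero, W.oplus_zero p⟩

lemma le_trans (W : EffectAlgebra E) {p q r : E} (h1 : W.le p q) (h2 : W.le q r) :
    W.le p r := by
  obtain ⟨u, hu⟩ := h1; obtain ⟨v, hv⟩ := h2
  obtain ⟨w, hw1, hw2⟩ := W.assoc' hu hv
  exact ⟨w, hw2⟩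

lemma le_antisymm (W : EffectAlgebra E) {p q : E} (h1 : W.le p q) (h2 : W.le q p) :
    p = q := by
  obtain ⟨u, hu⟩ := h1; obtain ⟨v, hv⟩ := h2
  obtain ⟨w, hw1, hw2⟩ := W.assoc' hu hv
  have : w = W.zero := W.absorb (by rw [W.comm] at hw2; exact hw2)
  rw [this] at hw1
  have hu0 : u = W.zero := W.pos hw1
  rw [hu0, W.oplus_zero] at hu
  injection hu





lemma flatten_update_cons {α : Type*} : ∀ {m : ℕ} (f : Fin m → List α) (t : Fin m) (x : α),
    ∃ l1 l2, (List.ofFn f).flatten = l1 ++ l2 ∧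
      (List.ofFn (Function.update f t (x :: f t))).flatten = l1 ++ x :: l2 := by
  intro m
  induction m with
  | zero => exact fun f t x => t.elim0
  | succ n ih =>
    intro f t x
    refine t.cases ?_ ?_
    · refine ⟨[], f 0 ++ (List.ofFn (f ∘ Fin.succ)).flatten, ?_, ?_⟩
      · simp only [List.ofFn_succ, List.flatten_cons, List.nil_append]
        rfl
      · rw [List.ofFn_succ]
        have h1 : Function.update f 0 (x :: f 0) 0 = x :: f 0 := by simp
        have h2 : (Function.update f 0 (x :: f 0)) ∘ Fin.succ = f ∘ Fin.succ := by
          funext j; simp [Function.update, Fin.succ_ne_zero]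
        simp only [h1]
        have : (fun i : Fin n => Function.update f 0 (x :: f 0) i.succ) = fun i => f i.succ := by
          funext j
          exact congrFun h2 j
        rw [this]
        simp only [List.flatten_cons, List.nil_append]
        rfl
    · intro t'
      obtain ⟨l1, l2, h1, h2⟩ := ih (f ∘ Fin.succ) t' x
      refine ⟨f 0 ++ l1, l2, ?_, ?_⟩
      · rw [List.ofFn_succ]
        simp only [List.flatten_cons, List.append_assoc]
        rw [show (fun i : Fin n => f i.succ) = f ∘ Fin.succ from rfl, h1]
      · rw [List.ofFn_succ]
        have h0 : Function.update f t'.succ (x :: f t'.succ) 0 = f 0 := by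
          rw [Function.update_of_ne (Fin.succ_ne_zero t').symm]
        have hc : (fun i : Fin n => Function.update f t'.succ (x :: f t'.succ) i.succ)
            = Function.update (f ∘ Fin.succ) t' (x :: (f ∘ Fin.succ) t') := by
          funext j
          by_cases hj : j = t'
          · subst hj; simp
          · rw [Function.update_of_ne (fun h => hj (Fin.succ_injective n h)),
              Function.update_of_ne hj]
            rfl
        simp only [h0, hc, List.flatten_cons, List.append_assoc]
        rw [h2]

lemma listSum_middle (W : EffectAlgebra E) :
    ∀ (l1 : List E) {l2 : List E} {x r s : E}, W.listSum (l1 ++ l2) = some r →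
      W.oplus x r = some s → W.listSum (l1 ++ x :: l2) = some s := by
  intro l1
  induction l1 with
  | nil =>
    intro l2 x r s h1 h2
    have h1' : W.listSum l2 = some r := h1
    show (W.listSum l2).bind (fun z => W.oplus x z) = some s
    rw [h1']
    exact h2
  | cons y l1' ih =>
    intro l2 x r s h1 h2
    have h1' : (W.listSum (l1' ++ l2)).bind (fun z => W.oplus y z) = some r := h1
    obtain ⟨u, hu, hyu⟩ := Option.bind_eq_some_iff.mp h1'
    -- x ⊕ (y ⊕ u) = s ; rearrange to y ⊕ (x ⊕ u) = s
    have hcomm : W.oplus x r = some s := h2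
    -- from y ⊕ u = r and x ⊕ r = s : (x) ⊕ (u ⊕ y) = s via comm
    have h3 : W.oplus u y = some r := by rw [W.comm]; exact hyu
    obtain ⟨w, hw1, hw2⟩ := W.assoc x u y s r h3 hcomm
    -- hw1 : x ⊕ u = w, hw2 : w ⊕ y = s
    have hth := ih hu hw1
    show (W.listSum (l1' ++ x :: l2)).bind (fun z => W.oplus y z) = some s
    rw [hth]
    show W.oplus y w = some s
    rw [W.comm]
    exact hw2

lemma mulSum_update (W : EffectAlgebra E) {m : ℕ} (a : Fin m → E) (k : Fin m → ℕ)
    (t : Fin m) {r s : E} (h1 : W.mulSum a k = some r) (h2 : W.oplus (a t) r = some s) :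
    W.mulSum a (Function.update k t (k t + 1)) = some s := by
  have hblocks : (fun j => List.replicate (Function.update k t (k t + 1) j) (a j))
      = Function.update (fun j => List.replicate (k j) (a j)) t
        (a t :: List.replicate (k t) (a t)) := by
    funext j
    by_cases hj : j = t
    · subst hj; simp [List.replicate_succ]
    · rw [Function.update_of_ne hj, Function.update_of_ne hj]
  obtain ⟨l1, l2, hL, hL'⟩ := flatten_update_cons (fun j => List.replicate (k j) (a j)) t (a t)
  unfold mulSum at h1 ⊢
  rw [hblocks, hL']
  rw [hL] at h1
  exact W.listSum_middle l1 h1 h2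

lemma mulSum_zero (W : EffectAlgebra E) {m : ℕ} (a : Fin m → E) :
    W.mulSum a (fun _ => 0) = some W.zero := by
  unfold mulSum
  have : (List.ofFn (fun t : Fin m => List.replicate 0 (a t))).flatten = [] := by
    simp
  rw [this]
  rfl

noncomputable def mu [Fintype E] (W : EffectAlgebra E) (x : E) : ℕ :=
  {y : E | W.le y x}.ncard

lemma mu_lt [Fintype E] (W : EffectAlgebra E) {y x : E} (h : W.le y x) (hne : y ≠ x) :
    W.mu y < W.mu x := by
  apply Set.ncard_lt_ncard _ (Set.toFinite _)
  constructor
  · intro z hz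
    exact W.le_trans hz h
  · intro hsub
    have hx : x ∈ {z : E | W.le z x} := W.le_refl x
    have : W.le x y := hsub hx
    exact hne (W.le_antisymm h this)

lemma mu_pos [Fintype E] (W : EffectAlgebra E) (x : E) : 0 < W.mu x :=
  (Set.ncard_pos (Set.toFinite _)).mpr ⟨x, W.le_refl x⟩

lemma exists_atom_le [Fintype E] (W : EffectAlgebra E) :
    ∀ (x : E), x ≠ W.zero → ∃ p, W.IsAtomElem p ∧ W.le p x := by
  have H : ∀ (n : ℕ) (x : E), W.mu x ≤ n → x ≠ W.zero → ∃ p, W.IsAtomElem p ∧ W.le p x := by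
    intro n
    induction n with
    | zero => intro x hx; exact absurd (lt_of_lt_of_le (W.mu_pos x) hx) (lt_irrefl 0)
    | succ n ih =>
      intro x hx hx0
      by_cases hat : W.IsAtomElem x
      · exact ⟨x, hat, W.le_refl x⟩
      · unfold IsAtomElem at hat
        push_neg at hat
        obtain ⟨y, hyx, hy0, hyne⟩ := hat hx0
        have hlt : W.mu y < W.mu x := W.mu_lt hyx hyne
        obtain ⟨p, hp, hpy⟩ := ih y (by omega) hy0
        exact ⟨p, hp, W.le_trans hpy hyx⟩
  exact fun x => H (W.mu x) x le_rfl

end EffectAlgebra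

/-- `(A|1)`: the matrix `A` augmented by a column of ones. -/
def augmentOnes {n m : ℕ} {R : Type*} [One R] (A : Matrix (Fin n) (Fin m) R) :
    Matrix (Fin n) (Fin (m + 1)) R :=
  Matrix.of fun i j => if h : (j : ℕ) < m then A i ⟨j, h⟩ else 1

/-- In a finite effect algebra every element is an orthosum of multiples of
the atoms. -/
theorem exists_atom_decomposition {E : Type*} [Fintype E] (W : EffectAlgebra E)
    {m : ℕ} (a : Fin m → E) (ha : W.AtomFamily a) (x : E) :
    ∃ k : Fin m → ℕ, W.mulSum a k = some x := by
  have H : ∀ (n : ℕ) (x : E), W.mu x ≤ n → ∃ k : Fin m → ℕ, W.mulSum a k = some x := by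
    intro n
    induction n with
    | zero => intro x hx; exact absurd (lt_of_lt_of_le (W.mu_pos x) hx) (lt_irrefl 0)
    | succ n ih =>
      intro x hx
      by_cases hx0 : x = W.zero
      · subst hx0; exact ⟨fun _ => 0, W.mulSum_zero a⟩
      · obtain ⟨p, hp, hpx⟩ := W.exists_atom_le x hx0
        obtain ⟨r, hr⟩ := hpx
        obtain ⟨t, ht⟩ := ha.2.2 p hp
        have hrx : W.le r x := ⟨p, by rw [W.comm]; exact hr⟩
        have hrne : r ≠ x := by
          intro h; subst h
          exact hp.1 (W.absorb hr)
        have hlt := W.mu_lt hrx hrne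
        obtain ⟨k, hk⟩ := ih r (by omega)
        exact ⟨Function.update k t (k t + 1),
          W.mulSum_update a k t hk (by rw [← ht]; exact hr)⟩
  exact H (W.mu x) x le_rfl
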